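/- Let $(F^{N,j})_{1 \le j \le N}$ be the marginals of an exchangeable probability measure on $\mathbb{X}^N$ (so they are consistent: integrating $F^{N,j+1}$ in its last variable gives $F^{N,j}$, and each $F^{N,j}$ is symmetric). Define the correlation functions $G^{N,m}$ by $G^{N,m}(z_1,\dots,z_m) = \sum_{\pi \vdash [m]} (\sharp\pi - 1)!(-1)^{\sharp\pi - 1} \prod_{B\in\pi} F^{N,\sharp B}(z_B)$. Then for all $2 \le m \le N$ and each $1 \le l \le m$: $\int_{\mathbb{X}} G^{N,m}(z_1,\dots,z_m)\, dz_l = 0$. -/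

import Mathlib

open Finset MeasureTheory

/-- Evaluate a family of symmetric kernels on the coordinates indexed by a block. -/
noncomputable def blockEval {X : Type*} (F : ∀ j : ℕ, (Fin j → X) → ℝ)
    {m : ℕ} (z : Fin m → X) (B : Finset (Fin m)) : ℝ :=
  F B.card (fun i => z (B.orderIsoOfFin rfl i))

namespace CorrZero

variable {𝕏 : Type*} {m : ℕ}

lemma blockEval_update_not_mem (F : ∀ j : ℕ, (Fin j → 𝕏) → ℝ) (l : Fin m)
    (z : Fin m → 𝕏) (x : 𝕏) {B : Finset (Fin m)} (hl : l ∉ B) :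
    blockEval F (Function.update z l x) B = blockEval F z B := by
  unfold blockEval
  congr 1
  funext i
  exact Function.update_of_ne (ne_of_mem_of_not_mem (B.orderIsoOfFin rfl i).2 hl) x z

lemma blockEval_update_mem (F : ∀ j : ℕ, (Fin j → 𝕏) → ℝ)
    (hsym : ∀ (j : ℕ) (σ : Equiv.Perm (Fin j)) (z : Fin j → 𝕏), F j (z ∘ σ) = F j z)
    (l : Fin m) (z : Fin m → 𝕏) (x : 𝕏) {B : Finset (Fin m)} (hl : l ∈ B) :
    blockEval F (Function.update z l x) B
      = F ((B.erase l).card + 1)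
          (Fin.snoc (fun i => z ((B.erase l).orderIsoOfFin rfl i)) x) := by
  classical
  set j := (B.erase l).card with hj
  have hcard : j + 1 = B.card := Finset.card_erase_add_one hl
  set w : Fin j → 𝕏 := fun i => z ((B.erase l).orderIsoOfFin rfl i) with hw
  set τ : Fin (j + 1) → {a // a ∈ B} :=
    Fin.snoc (fun i => ⟨((B.erase l).orderIsoOfFin rfl i : Fin m),
      Finset.mem_of_mem_erase ((B.erase l).orderIsoOfFin rfl i).2⟩) ⟨l, hl⟩ with hτ
  have hτinj : Function.Injective τ := by
    intro i1 i2 hi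
    induction i1 using Fin.lastCases with
    | last =>
      induction i2 using Fin.lastCases with
      | last => rfl
      | cast i2 =>
        exfalso
        rw [hτ] at hi
        simp only [Fin.snoc_last, Fin.snoc_castSucc, Subtype.mk.injEq] at hi
        exact Finset.ne_of_mem_erase ((B.erase l).orderIsoOfFin rfl i2).2 hi.symm
    | cast i1 =>
      induction i2 using Fin.lastCases with
      | last =>
        exfalso
        rw [hτ] at hi
        simp only [Fin.snoc_last, Fin.snoc_castSucc, Subtype.mk.injEq] at hi
        exact Finset.ne_of_mem_erase ((B.erase l).orderIsoOfFin rfl i1).2 hi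
      | cast i2 =>
        rw [hτ] at hi
        simp only [Fin.snoc_castSucc, Subtype.mk.injEq] at hi
        have := ((B.erase l).orderIsoOfFin rfl).injective (Subtype.ext hi)
        rw [this]
  have hτbij : Function.Bijective τ :=
    (Fintype.bijective_iff_injective_and_card τ).2
      ⟨hτinj, by simpa [Fintype.card_coe] using hcard⟩
  set σ1 : Fin (j + 1) ≃ {a // a ∈ B} := Equiv.ofBijective τ hτbij with hσ1
  set e1 : Fin B.card ≃ {a // a ∈ B} := (B.orderIsoOfFin rfl).toEquiv with he1
  set σ : Equiv.Perm (Fin B.card) := ((finCongr hcard.symm).trans σ1).trans e1.symm with hσ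
  have hστ : ∀ i : Fin (j + 1),
      ((B.orderIsoOfFin rfl) (σ (Fin.cast hcard i)) : Fin m) = (τ i : Fin m) := by
    intro i
    have h1 : Fin.cast hcard.symm (Fin.cast hcard i) = i := by ext; simp
    simp only [hσ, Equiv.trans_apply, finCongr_apply, h1]
    have : e1 (e1.symm (σ1 i)) = σ1 i := Equiv.apply_symm_apply _ _
    calc ((B.orderIsoOfFin rfl) (e1.symm (σ1 i)) : Fin m) = ((e1 (e1.symm (σ1 i)) : {a // a ∈ B}) : Fin m) := rfl
      _ = ((σ1 i : {a // a ∈ B}) : Fin m) := by rw [this]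
      _ = (τ i : Fin m) := rfl
  set u : Fin (j + 1) → 𝕏 := Fin.snoc (α := fun _ => 𝕏) w x with hu
  have hτlast : τ (Fin.last j) = ⟨l, hl⟩ := by
    rw [hτ]; exact Fin.snoc_last _ _
  have hτcast : ∀ i : Fin j, (τ i.castSucc : Fin m) = ((B.erase l).orderIsoOfFin rfl i : Fin m) := by
    intro i; rw [hτ, Fin.snoc_castSucc]
  have main : ∀ i : Fin (j + 1),
      Function.update z l x ((B.orderIsoOfFin rfl) (σ (Fin.cast hcard i)) : Fin m)
        = u i := by
    intro i
    rw [hστ i, hu]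
    induction i using Fin.lastCases with
    | last =>
      rw [hτlast, Fin.snoc_last]
      simp
    | cast i =>
      rw [hτcast i, Fin.snoc_castSucc]
      rw [Function.update_of_ne (Finset.ne_of_mem_erase ((B.erase l).orderIsoOfFin rfl i).2) x z]
  have congrF : ∀ {n n' : ℕ} (h : n = n') (u : Fin n' → 𝕏),
      F n (fun i => u (Fin.cast h i)) = F n' u := by
    intro n n' h u
    subst h
    rfl
  show blockEval F (Function.update z l x) B = F (j + 1) u
  calc blockEval F (Function.update z l x) B
      = F B.card (fun i => Function.update z l x ((B.orderIsoOfFin rfl) i)) := rfl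
    _ = F B.card ((fun i => Function.update z l x ((B.orderIsoOfFin rfl) i)) ∘ σ) :=
        (hsym B.card σ _).symm
    _ = F B.card (fun i => u (Fin.cast hcard.symm i)) := by
        congr 1
        funext i
        have h3 := main (Fin.cast hcard.symm i)
        have h2 : Fin.cast hcard (Fin.cast hcard.symm i) = i := by ext; simp
        rw [h2] at h3
        exact h3
    _ = F (j + 1) u := congrF hcard.symm u

section Parts

variable {α : Type*} [DecidableEq α]

lemma avoid_parts_of_mem {s : Finset α} (ρ : Finpartition s) {B₀ : Finset α}
    (h : B₀ ∈ ρ.parts) : (ρ.avoid B₀).parts = ρ.parts.erase B₀ := by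
  ext C
  rw [Finpartition.mem_avoid, Finset.mem_erase]
  constructor
  · rintro ⟨d, hd, hdb, rfl⟩
    have hne : d ≠ B₀ := by rintro rfl; exact hdb le_rfl
    have hdis : Disjoint d B₀ := ρ.disjoint hd h hne
    rw [hdis.sdiff_eq_left]
    exact ⟨hne, hd⟩
  · rintro ⟨hne, hC⟩
    have hdis : Disjoint C B₀ := ρ.disjoint hC h hne
    exact ⟨C, hC, fun hle => (ρ.nonempty_of_mem_parts hC).ne_empty (hdis.eq_bot_of_le hle),
      hdis.sdiff_eq_left⟩

end Parts

section Partitions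

variable {m : ℕ} (l : Fin m)

lemma not_mem_of_mem_parts {ρ : Finpartition ((univ : Finset (Fin m)).erase l)}
    {B : Finset (Fin m)} (h : B ∈ ρ.parts) : l ∉ B :=
  fun hl => Finset.notMem_erase l univ (ρ.le h hl)

lemma singleton_not_mem_parts (ρ : Finpartition ((univ : Finset (Fin m)).erase l)) :
    {l} ∉ ρ.parts :=
  fun h => not_mem_of_mem_parts l h (Finset.mem_singleton_self l)

/-- Extend a partition of `univ.erase l` by the singleton block `{l}`. -/
def pnone (ρ : Finpartition ((univ : Finset (Fin m)).erase l)) :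
    Finpartition (univ : Finset (Fin m)) :=
  ρ.extend (b := {l}) (by simp)
    (Finset.disjoint_singleton_right.2 (Finset.notMem_erase l univ))
    (by
      rw [sup_eq_union, Finset.union_comm, ← Finset.insert_eq,
        Finset.insert_erase (Finset.mem_univ l)])

lemma pnone_parts (ρ : Finpartition ((univ : Finset (Fin m)).erase l)) :
    (pnone l ρ).parts = insert {l} ρ.parts := rfl

/-- Extend a partition of `univ.erase l` by inserting `l` into the block `B₀`. -/
def psome (ρ : Finpartition ((univ : Finset (Fin m)).erase l)) (B₀ : Finset (Fin m))
    (h : B₀ ∈ ρ.parts) : Finpartition (univ : Finset (Fin m)) :=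
  (ρ.avoid B₀).extend (b := insert l B₀) (by simp)
    (by
      rw [Finset.disjoint_insert_right]
      refine ⟨by simp, disjoint_sdiff_self_left⟩)
    (by
      have hsub : B₀ ⊆ (univ : Finset (Fin m)).erase l := ρ.le h
      rw [sup_eq_union]
      ext a
      simp only [Finset.mem_union, Finset.mem_sdiff, Finset.mem_erase, Finset.mem_insert,
        Finset.mem_univ, and_true, iff_true]
      tauto)

lemma psome_parts (ρ : Finpartition ((univ : Finset (Fin m)).erase l)) (B₀ : Finset (Fin m))
    (h : B₀ ∈ ρ.parts) :
    (psome l ρ B₀ h).parts = insert (insert l B₀) (ρ.parts.erase B₀) := by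
  show insert (insert l B₀) (ρ.avoid B₀).parts = _
  rw [avoid_parts_of_mem ρ h]

/-- The partition of `univ.erase l` induced by a partition of `univ`. -/
def rho (π : Finpartition (univ : Finset (Fin m))) :
    Finpartition ((univ : Finset (Fin m)).erase l) :=
  (π.avoid {l}).copy (by rw [← Finset.erase_eq])

lemma not_mem_part_of_ne {π : Finpartition (univ : Finset (Fin m))} {B : Finset (Fin m)}
    (hB : B ∈ π.parts) (hne : B ≠ π.part l) : l ∉ B :=
  fun hl => hne (π.part_eq_of_mem hB hl).symm

lemma rho_parts_of_eq {π : Finpartition (univ : Finset (Fin m))} (h : π.part l = {l}) :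
    (rho l π).parts = π.parts.erase {l} := by
  show (π.avoid {l}).parts = _
  ext C
  rw [Finpartition.mem_avoid, Finset.mem_erase]
  constructor
  · rintro ⟨d, hd, hdb, rfl⟩
    have hdne : d ≠ {l} := fun e => hdb (e ▸ le_rfl)
    have hld : l ∉ d := not_mem_part_of_ne l hd (by rw [h]; exact hdne)
    have e : d \ {l} = d := by
      rw [Finset.sdiff_eq_self_iff_disjoint, Finset.disjoint_singleton_right]
      exact hld
    rw [e]
    exact ⟨hdne, hd⟩
  · rintro ⟨hne, hC⟩
    have hlC : l ∉ C := not_mem_part_of_ne l hC (by rw [h]; exact hne)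
    have e : C \ {l} = C := by
      rw [Finset.sdiff_eq_self_iff_disjoint, Finset.disjoint_singleton_right]
      exact hlC
    refine ⟨C, hC, ?_, e⟩
    intro hle
    rcases Finset.subset_singleton_iff.1 hle with e' | e'
    · exact (π.nonempty_of_mem_parts hC).ne_empty e'
    · exact hne e'

lemma rho_parts_of_ne {π : Finpartition (univ : Finset (Fin m))} (h : π.part l ≠ {l}) :
    (rho l π).parts = insert ((π.part l).erase l) (π.parts.erase (π.part l)) := by
  have hPmem : π.part l ∈ π.parts := π.part_mem.2 (Finset.mem_univ l)
  have hlP : l ∈ π.part l := π.mem_part (Finset.mem_univ l)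
  show (π.avoid {l}).parts = _
  ext C
  rw [Finpartition.mem_avoid, Finset.mem_insert, Finset.mem_erase]
  constructor
  · rintro ⟨d, hd, hdb, rfl⟩
    by_cases hdP : d = π.part l
    · left; rw [hdP, Finset.erase_eq]
    · have hld : l ∉ d := not_mem_part_of_ne l hd hdP
      have e : d \ {l} = d := by
        rw [Finset.sdiff_eq_self_iff_disjoint, Finset.disjoint_singleton_right]
        exact hld
      rw [e]
      exact Or.inr ⟨hdP, hd⟩
  · rintro (rfl | ⟨hne, hC⟩)
    · refine ⟨π.part l, hPmem, ?_, (Finset.erase_eq _ _).symm⟩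
      intro hle
      rcases Finset.subset_singleton_iff.1 hle with e' | e'
      · exact (π.nonempty_of_mem_parts hPmem).ne_empty e'
      · exact h e'
    · have hlC : l ∉ C := not_mem_part_of_ne l hC hne
      have e : C \ {l} = C := by
        rw [Finset.sdiff_eq_self_iff_disjoint, Finset.disjoint_singleton_right]
        exact hlC
      refine ⟨C, hC, ?_, e⟩
      intro hle
      rcases Finset.subset_singleton_iff.1 hle with e' | e'
      · exact (π.nonempty_of_mem_parts hC).ne_empty e'
      · exact hlC (e' ▸ Finset.mem_singleton_self l)

lemma erase_part_not_mem {π : Finpartition (univ : Finset (Fin m))} (h : π.part l ≠ {l}) :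
    (π.part l).erase l ∉ π.parts.erase (π.part l) := by
  have hPmem : π.part l ∈ π.parts := π.part_mem.2 (Finset.mem_univ l)
  have hlP : l ∈ π.part l := π.mem_part (Finset.mem_univ l)
  intro hmem
  have hmem' : (π.part l).erase l ∈ π.parts := Finset.mem_of_mem_erase hmem
  have hnonempty : ((π.part l).erase l).Nonempty := by
    rw [Finset.nonempty_iff_ne_empty]
    intro e
    rcases (Finset.erase_eq_empty_iff _ _).1 e with e' | e'
    · exact (π.nonempty_of_mem_parts hPmem).ne_empty e'
    · exact h e'
  obtain ⟨a, ha⟩ := hnonempty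
  have := π.eq_of_mem_parts hmem' hPmem ha (Finset.mem_of_mem_erase ha)
  exact Finset.notMem_erase l (π.part l) (by rw [this]; exact hlP)

end Partitions

section Sum

variable {m : ℕ}

lemma sum_combinatorial (l : Fin m) (hm : 2 ≤ m) (Q : Finset (Fin m) → ℝ)
    (hQl : Q {l} = 1)
    (hQ : ∀ B : Finset (Fin m), l ∈ B → B ≠ {l} → Q B = Q (B.erase l)) :
    ∑ π : Finpartition (univ : Finset (Fin m)),
      ((-1 : ℝ) ^ (π.parts.card - 1) * (π.parts.card - 1).factorial *
        ∏ B ∈ π.parts, Q B) = 0 := by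
  classical
  set val : Finpartition (univ : Finset (Fin m)) → ℝ := fun π =>
    (-1 : ℝ) ^ (π.parts.card - 1) * (π.parts.card - 1).factorial * ∏ B ∈ π.parts, Q B
    with hval
  show ∑ π ∈ Finset.univ, val π = 0
  rw [← Finset.sum_filter_add_sum_filter_not Finset.univ (fun π => π.part l = {l}) val]
  have h1 : ∑ π ∈ Finset.univ.filter (fun π => π.part l = {l}), val π
      = ∑ ρ ∈ (Finset.univ : Finset (Finpartition ((univ : Finset (Fin m)).erase l))),
          ((-1 : ℝ) ^ ρ.parts.card * ρ.parts.card.factorial * ∏ B ∈ ρ.parts, Q B) := by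
    refine Finset.sum_bij' (fun π _ => rho l π) (fun ρ _ => pnone l ρ)
      (fun π hπ => Finset.mem_univ _) (fun ρ hρ => ?_) (fun π hπ => ?_) (fun ρ hρ => ?_)
      (fun π hπ => ?_)
    · -- pnone ρ ∈ filter
      rw [Finset.mem_filter]
      refine ⟨Finset.mem_univ _, ?_⟩
      exact Finpartition.part_eq_of_mem _
        (by rw [pnone_parts]; exact Finset.mem_insert_self _ _) (Finset.mem_singleton_self l)
    · -- pnone (rho π) = π
      have hfl : π.part l = {l} := (Finset.mem_filter.1 hπ).2
      have hmem : {l} ∈ π.parts := hfl ▸ π.part_mem.2 (Finset.mem_univ l)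
      apply Finpartition.ext
      rw [pnone_parts, rho_parts_of_eq l hfl, Finset.insert_erase hmem]
    · -- rho (pnone ρ) = ρ
      have hpart : (pnone l ρ).part l = {l} :=
        Finpartition.part_eq_of_mem _
          (by rw [pnone_parts]; exact Finset.mem_insert_self _ _) (Finset.mem_singleton_self l)
      apply Finpartition.ext
      rw [rho_parts_of_eq l hpart, pnone_parts,
        Finset.erase_insert (singleton_not_mem_parts l ρ)]
    · -- values agree
      have hfl : π.part l = {l} := (Finset.mem_filter.1 hπ).2
      have hmem : {l} ∈ π.parts := hfl ▸ π.part_mem.2 (Finset.mem_univ l)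
      have hparts : (rho l π).parts = π.parts.erase {l} := rho_parts_of_eq l hfl
      have hcard : (rho l π).parts.card = π.parts.card - 1 := by
        rw [hparts, Finset.card_erase_of_mem hmem]
      have hprod : ∏ B ∈ π.parts, Q B = ∏ B ∈ (rho l π).parts, Q B := by
        rw [hparts, ← Finset.mul_prod_erase _ _ hmem, hQl, one_mul]
      rw [hval]
      dsimp only
      rw [hcard, hprod]
  have h2 : ∑ π ∈ Finset.univ.filter (fun π => ¬ π.part l = {l}), val π
      = ∑ p ∈ (Finset.univ : Finset (Finpartition ((univ : Finset (Fin m)).erase l))).sigma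
          (fun ρ => ρ.parts),
          ((-1 : ℝ) ^ (p.1.parts.card - 1) * (p.1.parts.card - 1).factorial *
            ∏ B ∈ p.1.parts, Q B) := by
    refine Finset.sum_bij' (fun π _ => ⟨rho l π, (π.part l).erase l⟩)
      (fun p hp => psome l p.1 p.2 (Finset.mem_sigma.1 hp).2)
      (fun π hπ => ?_) (fun p hp => ?_) (fun π hπ => ?_) (fun p hp => ?_) (fun π hπ => ?_)
    · -- i lands in sigma
      have hne : π.part l ≠ {l} := (Finset.mem_filter.1 hπ).2
      rw [Finset.mem_sigma]
      exact ⟨Finset.mem_univ _, by rw [rho_parts_of_ne l hne]; exact Finset.mem_insert_self _ _⟩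
    · -- j lands in filter
      have hB₀ : p.2 ∈ p.1.parts := (Finset.mem_sigma.1 hp).2
      have hlB₀ : l ∉ p.2 := not_mem_of_mem_parts l hB₀
      have hpart : (psome l p.1 p.2 hB₀).part l = insert l p.2 :=
        Finpartition.part_eq_of_mem _
          (by rw [psome_parts]; exact Finset.mem_insert_self _ _) (Finset.mem_insert_self _ _)
      have hne' : insert l p.2 ≠ {l} := by
        obtain ⟨a, ha⟩ := p.1.nonempty_of_mem_parts hB₀
        intro e
        have : a ∈ ({l} : Finset (Fin m)) := e ▸ Finset.mem_insert_of_mem ha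
        exact hlB₀ ((Finset.mem_singleton.1 this) ▸ ha)
      rw [Finset.mem_filter]
      exact ⟨Finset.mem_univ _, by rw [hpart]; exact hne'⟩
    · -- left inverse : psome (rho π) ((part l).erase l) = π
      have hne : π.part l ≠ {l} := (Finset.mem_filter.1 hπ).2
      have hPmem : π.part l ∈ π.parts := π.part_mem.2 (Finset.mem_univ l)
      have hlP : l ∈ π.part l := π.mem_part (Finset.mem_univ l)
      apply Finpartition.ext
      rw [psome_parts, rho_parts_of_ne l hne, Finset.insert_erase hlP,
        Finset.erase_insert (erase_part_not_mem l hne), Finset.insert_erase hPmem]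
    · -- right inverse
      obtain ⟨ρ, B₀⟩ := p
      have hB₀ : B₀ ∈ ρ.parts := (Finset.mem_sigma.1 hp).2
      have hlB₀ : l ∉ B₀ := not_mem_of_mem_parts l hB₀
      have hpart : (psome l ρ B₀ hB₀).part l = insert l B₀ :=
        Finpartition.part_eq_of_mem _
          (by rw [psome_parts]; exact Finset.mem_insert_self _ _) (Finset.mem_insert_self _ _)
      have hne' : insert l B₀ ≠ {l} := by
        obtain ⟨a, ha⟩ := ρ.nonempty_of_mem_parts hB₀
        intro e
        have : a ∈ ({l} : Finset (Fin m)) := e ▸ Finset.mem_insert_of_mem ha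
        exact hlB₀ ((Finset.mem_singleton.1 this) ▸ ha)
      have hpne : (psome l ρ B₀ hB₀).part l ≠ {l} := by rw [hpart]; exact hne'
      have hrho : rho l (psome l ρ B₀ hB₀) = ρ := by
        apply Finpartition.ext
        rw [rho_parts_of_ne l hpne, hpart, Finset.erase_insert hlB₀, psome_parts,
          Finset.erase_insert ?hnotmem, Finset.insert_erase hB₀]
        case hnotmem =>
          intro hmem
          exact not_mem_of_mem_parts l (Finset.mem_of_mem_erase hmem)
            (Finset.mem_insert_self l B₀)
      have hsnd : ((psome l ρ B₀ hB₀).part l).erase l = B₀ := by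
        rw [hpart, Finset.erase_insert hlB₀]
      refine Sigma.ext hrho ?_
      dsimp only
      rw [hsnd]
    · -- values agree
      have hne : π.part l ≠ {l} := (Finset.mem_filter.1 hπ).2
      have hPmem : π.part l ∈ π.parts := π.part_mem.2 (Finset.mem_univ l)
      have hlP : l ∈ π.part l := π.mem_part (Finset.mem_univ l)
      have hparts : (rho l π).parts
          = insert ((π.part l).erase l) (π.parts.erase (π.part l)) := rho_parts_of_ne l hne
      have hcard : (rho l π).parts.card = π.parts.card := by
        rw [hparts, Finset.card_insert_of_notMem (erase_part_not_mem l hne),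
          Finset.card_erase_add_one hPmem]
      have hprod : ∏ B ∈ π.parts, Q B = ∏ B ∈ (rho l π).parts, Q B := by
        rw [hparts, Finset.prod_insert (erase_part_not_mem l hne),
          ← hQ (π.part l) hlP hne, Finset.mul_prod_erase _ _ hPmem]
      rw [hval]
      dsimp only
      rw [hcard, hprod]
  rw [h1, h2, Finset.sum_sigma, ← Finset.sum_add_distrib]
  refine Finset.sum_eq_zero (fun ρ _ => ?_)
  dsimp only
  rw [Finset.sum_const]
  have hk : ρ.parts.card ≠ 0 := by
    have hne : ((univ : Finset (Fin m)).erase l).Nonempty := by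
      rw [← Finset.card_pos, Finset.card_erase_of_mem (Finset.mem_univ l), Finset.card_univ,
        Fintype.card_fin]
      omega
    have := ρ.parts_nonempty (by rw [Finset.bot_eq_empty]; exact hne.ne_empty)
    simpa [Finset.card_eq_zero, ← Finset.nonempty_iff_ne_empty] using this.ne_empty
  obtain ⟨k, hk'⟩ : ∃ k, ρ.parts.card = k + 1 :=
    ⟨ρ.parts.card - 1, by omega⟩
  rw [hk']
  simp only [Nat.add_sub_cancel, nsmul_eq_mul, Nat.factorial_succ]
  push_cast
  ring

end Sum

end CorrZero

open CorrZero

/-- if `(F^j)_j` is a consistent symmetric family of marginal densities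
(w.r.t. a reference measure `μ`, with `∫ F¹ dμ = 1` and
`∫ F^{j+1}(z, x) dμ(x) = F^j(z)`), then the correlation function
`G^m(z) = ∑_{π ⊢ [m]} (♯π-1)!(-1)^{♯π-1} ∏_{B∈π} F^{♯B}(z_B)` satisfies
`∫ G^m dμ(z_l) = 0` in each variable `z_l`, for `2 ≤ m ≤ N`. -/
theorem correlation_integral_zero
    {𝕏 : Type*} [MeasurableSpace 𝕏] (μ : Measure 𝕏)
    (N : ℕ) (F : ∀ j : ℕ, (Fin j → 𝕏) → ℝ)
    (hsym : ∀ (j : ℕ) (σ : Equiv.Perm (Fin j)) (z : Fin j → 𝕏), F j (z ∘ σ) = F j z)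
    (hnorm : ∫ x, F 1 (fun _ => x) ∂μ = 1)
    (hint : ∀ (j : ℕ) (z : Fin j → 𝕏),
      Integrable (fun x => F (j + 1) (Fin.snoc z x)) μ)
    (hconsist : ∀ (j : ℕ), 1 ≤ j → ∀ z : Fin j → 𝕏,
      ∫ x, F (j + 1) (Fin.snoc z x) ∂μ = F j z)
    (m : ℕ) (hm : 2 ≤ m) (hmN : m ≤ N) (l : Fin m) (z : Fin m → 𝕏) :
    ∫ x, (∑ π : Finpartition (univ : Finset (Fin m)),
        (-1 : ℝ) ^ (π.parts.card - 1) * (π.parts.card - 1).factorial *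
          ∏ B ∈ π.parts, blockEval F (Function.update z l x) B) ∂μ = 0 := by
  classical
  set Q : Finset (Fin m) → ℝ :=
    fun B => if B = {l} then 1 else blockEval F z (B.erase l) with hQdef
  have hQl : Q {l} = 1 := by simp [hQdef]
  have hQerase : ∀ B : Finset (Fin m), l ∈ B → B ≠ {l} → Q B = Q (B.erase l) := by
    intro B hlB hne
    have hne2 : B.erase l ≠ {l} :=
      fun e => (Finset.notMem_erase l B) (by rw [e]; exact Finset.mem_singleton_self l)
    rw [hQdef]
    dsimp only
    rw [if_neg hne, if_neg hne2, Finset.erase_idem]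
  have hsnoc : ∀ (k : ℕ) (w : Fin k → 𝕏), ∫ x, F (k + 1) (Fin.snoc w x) ∂μ
      = if k = 0 then 1 else F k w := by
    intro k w
    cases k with
    | zero =>
      rw [if_pos rfl]
      have he0 : ∀ x : 𝕏, Fin.snoc (α := fun _ => 𝕏) w x = fun _ : Fin 1 => x := by
        intro x
        funext i
        have hi : i = Fin.last 0 := by
          rcases i with ⟨iv, hiv⟩
          simp only [Fin.last, Fin.mk.injEq]
          omega
        rw [hi, Fin.snoc_last]
      have he : (fun x => F 1 (Fin.snoc w x)) = fun x => F 1 (fun _ => x) :=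
        funext fun x => congrArg (F 1) (he0 x)
      rw [he, hnorm]
    | succ k =>
      rw [if_neg (Nat.succ_ne_zero k)]
      exact hconsist (k + 1) (Nat.succ_le_succ (Nat.zero_le k)) w
  have key : ∀ π : Finpartition (univ : Finset (Fin m)),
      (Integrable (fun x => (-1 : ℝ) ^ (π.parts.card - 1) * (π.parts.card - 1).factorial *
          ∏ B ∈ π.parts, blockEval F (Function.update z l x) B) μ) ∧
      ∫ x, ((-1 : ℝ) ^ (π.parts.card - 1) * (π.parts.card - 1).factorial *
          ∏ B ∈ π.parts, blockEval F (Function.update z l x) B) ∂μ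
        = (-1 : ℝ) ^ (π.parts.card - 1) * (π.parts.card - 1).factorial *
            ∏ B ∈ π.parts, Q B := by
    intro π
    have hPmem : π.part l ∈ π.parts := π.part_mem.2 (Finset.mem_univ l)
    have hlP : l ∈ π.part l := π.mem_part (Finset.mem_univ l)
    set P := π.part l with hP
    set C : ℝ := (-1 : ℝ) ^ (π.parts.card - 1) * (π.parts.card - 1).factorial *
      ∏ B ∈ π.parts.erase P, Q B with hC
    have hfun : (fun x => (-1 : ℝ) ^ (π.parts.card - 1) * (π.parts.card - 1).factorial *
          ∏ B ∈ π.parts, blockEval F (Function.update z l x) B)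
        = fun x => C * F ((P.erase l).card + 1)
            (Fin.snoc (fun i => z ((P.erase l).orderIsoOfFin rfl i)) x) := by
      funext x
      rw [← Finset.mul_prod_erase _ _ hPmem]
      have h2 : ∏ B ∈ π.parts.erase P, blockEval F (Function.update z l x) B
          = ∏ B ∈ π.parts.erase P, Q B := by
        refine Finset.prod_congr rfl (fun B hB => ?_)
        have hB1 : B ∈ π.parts := Finset.mem_of_mem_erase hB
        have hBP : B ≠ P := Finset.ne_of_mem_erase hB
        have hlB : l ∉ B := not_mem_part_of_ne l hB1 hBP
        rw [blockEval_update_not_mem F l z x hlB, hQdef]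
        dsimp only
        rw [if_neg (fun e => hlB (by rw [e]; exact Finset.mem_singleton_self l)),
          Finset.erase_eq_of_notMem hlB]
      rw [blockEval_update_mem F hsym l z x hlP, h2, hC]
      ring
    constructor
    · rw [hfun]
      exact (hint _ _).const_mul C
    · rw [hfun, MeasureTheory.integral_const_mul, hsnoc]
      have hQP : (if (P.erase l).card = 0 then (1 : ℝ)
          else F (P.erase l).card (fun i => z ((P.erase l).orderIsoOfFin rfl i))) = Q P := by
        by_cases h0 : (P.erase l).card = 0
        · rw [if_pos h0]
          have hPl : P = {l} := by
            rcases (Finset.erase_eq_empty_iff P l).1 (Finset.card_eq_zero.1 h0) with e | e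
            · exact absurd e (π.nonempty_of_mem_parts hPmem).ne_empty
            · exact e
          rw [hQdef]
          dsimp only
          rw [if_pos hPl]
        · rw [if_neg h0]
          have hPl : P ≠ {l} := by
            intro e
            rw [e] at h0
            simp at h0
          rw [hQdef]
          dsimp only
          rw [if_neg hPl]
          rfl
      rw [hQP, hC, ← Finset.mul_prod_erase _ Q hPmem]
      ring
  rw [integral_finset_sum _ (fun π _ => (key π).1)]
  rw [Finset.sum_congr rfl (fun π _ => (key π).2)]
  exact sum_combinatorial l hm Q hQl hQerase
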